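/- Let t ∈ ℤ₊^r, let M_{A,t} = {±m₁,…,±m_g} be a Markov subbasis for t, and let G := {x^{m_i⁺} − x^{m_i⁻} : i = 1,…,g}. Suppose G has the following three properties: (1) G is a lex Gröbner basis, with ordering x₁ > x₂ > ⋯ > x_d on indeterminates, for the ideal I_{M_{A,t}} that it generates; (2) for each i = 1,…,d, every element of G lying in ℚ[x_i,…,x_d] is square-free in x_i; and (3) (I_{M_{A,t}} : x_i^∞) ∩ ℚ[x_{i+1},…,x_d] ⊆ I_{M_{A,t}} for each i = 1,…,d−1. Then the polytope A⁻¹[t] has the sequential interval property. -/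

import Mathlib

open Matrix MvPolynomial

namespace SIS

variable {r d : ℕ}

/-- The integer matrix obtained from a nonnegative-integer matrix. -/
def intMat (A : Matrix (Fin r) (Fin d) ℕ) : Matrix (Fin r) (Fin d) ℤ :=
  fun i j => (A i j : ℤ)

/-- The rational matrix obtained from a nonnegative-integer matrix. -/
def ratMat (A : Matrix (Fin r) (Fin d) ℕ) : Matrix (Fin r) (Fin d) ℚ :=
  fun i j => (A i j : ℚ)

def natToInt (v : Fin d → ℕ) : Fin d → ℤ := fun i => (v i : ℤ)

/-- `A⁻¹[t]`: nonnegative integer tables with constraint value `t`. -/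
def tables (A : Matrix (Fin r) (Fin d) ℕ) (t : Fin r → ℕ) : Set (Fin d → ℕ) :=
  {n | A.mulVec n = t}

/-- `A_ℚ⁻¹[t]`: nonnegative rational points with constraint value `t`. -/
def ratTables (A : Matrix (Fin r) (Fin d) ℕ) (t : Fin r → ℕ) : Set (Fin d → ℚ) :=
  {q | (∀ i, 0 ≤ q i) ∧ (ratMat A).mulVec q = fun i => (t i : ℚ)}

/-- ker_ℤ(A). -/
def kerZ (A : Matrix (Fin r) (Fin d) ℕ) : Set (Fin d → ℤ) :=
  {m | (intMat A).mulVec m = 0}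

/-- The some nonempty subset of the rows of `A` sums to a strictly positive vector. -/
def RowsPos (A : Matrix (Fin r) (Fin d) ℕ) : Prop :=
  ∃ R : Finset (Fin r), R.Nonempty ∧ ∀ j, 0 < ∑ i ∈ R, A i j

/-- `u` and `v` are connected using moves from `M`, staying componentwise nonnegative. -/
def connects (M : Set (Fin d → ℤ)) (u v : Fin d → ℕ) : Prop :=
  ∃ l : List (Fin d → ℤ), (∀ m ∈ l, m ∈ M) ∧
    natToInt u = natToInt v + l.sum ∧
    ∀ k, k ≤ l.length → ∀ i, 0 ≤ natToInt v i + (l.take k).sum i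

/-- A Markov basis for `A`. -/
def IsMarkovBasis (A : Matrix (Fin r) (Fin d) ℕ) (M : Set (Fin d → ℤ)) : Prop :=
  M.Finite ∧ M ⊆ kerZ A ∧
    ∀ u v : Fin d → ℕ, A.mulVec u = A.mulVec v → connects M u v

/-- A Markov subbasis for `A` and the fixed value `t`. -/
def IsMarkovSubbasis (A : Matrix (Fin r) (Fin d) ℕ) (t : Fin r → ℕ)
    (M : Set (Fin d → ℤ)) : Prop :=
  M.Finite ∧ M ⊆ kerZ A ∧ ∀ u ∈ tables A t, ∀ v ∈ tables A t, connects M u v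

/-- A set of (nonnegative) integers is an interval of integers. -/
def IsIntInterval (S : Set ℕ) : Prop :=
  ∀ a ∈ S, ∀ b ∈ S, ∀ c : ℕ, a ≤ c → c ≤ b → c ∈ S

/-- The set of feasible values of cell `i` given that cells `j < i` are fixed to `w j`;
this is the set `π₁(A_{i}⁻¹[t - Σ_{j<i} w_j a_j])` of the paper. -/
def stepSet (A : Matrix (Fin r) (Fin d) ℕ) (t : Fin r → ℕ) (i : Fin d)
    (w : Fin d → ℕ) : Set ℕ :=
  {c | ∃ n ∈ tables A t, (∀ j, j < i → n j = w j) ∧ n i = c}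

/-- The sequential interval property for `A⁻¹[t]`. -/
def SeqIntervalProperty (A : Matrix (Fin r) (Fin d) ℕ) (t : Fin r → ℕ) : Prop :=
  ∀ i : Fin d, ∀ w : Fin d → ℕ, IsIntInterval (stepSet A t i w)

/-- m⁺. -/
def posPart (m : Fin d → ℤ) : Fin d → ℕ := fun i => (m i).toNat

/-- m⁻. -/
def negPart (m : Fin d → ℤ) : Fin d → ℕ := fun i => (-(m i)).toNat

/-- The monomial `x^ν`. -/
noncomputable def monom (ν : Fin d → ℕ) : MvPolynomial (Fin d) ℚ :=
  MvPolynomial.monomial (Finsupp.equivFunOnFinite.symm ν) 1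

/-- The binomial `x^{m⁺} - x^{m⁻}` of a Markov move `m`. -/
noncomputable def moveBinomial (m : Fin d → ℤ) : MvPolynomial (Fin d) ℚ :=
  monom (posPart m) - monom (negPart m)

/-- The toric ideal `I_A`. -/
noncomputable def toricIdeal (A : Matrix (Fin r) (Fin d) ℕ) : Ideal (MvPolynomial (Fin d) ℚ) :=
  Ideal.span {f | ∃ u v : Fin d → ℕ, A.mulVec u = A.mulVec v ∧ f = monom u - monom v}

/-- Lexicographic order on exponent vectors with `x₁ > x₂ > ⋯ > x_d`:
`μ <lex ν` iff the first nonzero entry of `ν - μ` is positive. -/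
def lexLt (μ ν : Fin d →₀ ℕ) : Prop :=
  ∃ i : Fin d, μ i < ν i ∧ ∀ j, j < i → μ j = ν j

/-- `ν` is the lex-leading exponent of `p`. -/
def IsLexLead (p : MvPolynomial (Fin d) ℚ) (ν : Fin d →₀ ℕ) : Prop :=
  ν ∈ p.support ∧ ∀ μ ∈ p.support, μ ≠ ν → lexLt μ ν

/-- `x^νg` divides `x^νf`. -/
def expDivides (νg νf : Fin d →₀ ℕ) : Prop := ∀ i, νg i ≤ νf i

/-- `G` is a lex Gröbner basis for `I` (ordering `x₁ > x₂ > ⋯ > x_d`). -/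
def IsLexGB (G : Set (MvPolynomial (Fin d) ℚ)) (I : Ideal (MvPolynomial (Fin d) ℚ)) : Prop :=
  G.Finite ∧ (∀ g ∈ G, g ≠ 0 ∧ g ∈ I) ∧
    ∀ f ∈ I, f ≠ 0 → ∃ g ∈ G, ∃ νg νf,
      IsLexLead g νg ∧ IsLexLead f νf ∧ expDivides νg νf

/-- Graded reverse lexicographic order with `x_d > x_{d-1} > ⋯ > x₁`:
`μ <grevlex ν` iff deg μ < deg ν, or degrees agree and the first nonzero entry of
`ν - μ` (scanning coordinates `1, 2, …, d`) is negative. -/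
def grevlexLt (μ ν : Fin d →₀ ℕ) : Prop :=
  (∑ i, μ i) < (∑ i, ν i) ∨
    ((∑ i, μ i) = (∑ i, ν i) ∧ ∃ i : Fin d, ν i < μ i ∧ ∀ j, j < i → μ j = ν j)

/-- `ν` is the grevlex-leading exponent of `p`. -/
def IsGrevlexLead (p : MvPolynomial (Fin d) ℚ) (ν : Fin d →₀ ℕ) : Prop :=
  ν ∈ p.support ∧ ∀ μ ∈ p.support, μ ≠ ν → grevlexLt μ ν

/-- `G` is a grevlex Gröbner basis for `I` (ordering `x_d > ⋯ > x₁`). -/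
def IsGrevlexGB (G : Set (MvPolynomial (Fin d) ℚ)) (I : Ideal (MvPolynomial (Fin d) ℚ)) : Prop :=
  G.Finite ∧ (∀ g ∈ G, g ≠ 0 ∧ g ∈ I) ∧
    ∀ f ∈ I, f ≠ 0 → ∃ g ∈ G, ∃ νg νf,
      IsGrevlexLead g νg ∧ IsGrevlexLead f νf ∧ expDivides νg νf

/-- `p` is square-free in `x_i`. -/
def SquareFreeIn (p : MvPolynomial (Fin d) ℚ) (i : Fin d) : Prop :=
  ∀ ν ∈ p.support, ν i ≤ 1

/-- `p` lies in `ℚ[x_i, …, x_d]`. -/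
def OnlyVarsFrom (p : MvPolynomial (Fin d) ℚ) (i : Fin d) : Prop :=
  ∀ ν ∈ p.support, ∀ j, j < i → ν j = 0

/-- The toric ideal `I_{A_j}` of the submatrix of the last columns, viewed inside
`ℚ[x₁, …, x_d]`. -/
noncomputable def toricIdealFrom (A : Matrix (Fin r) (Fin d) ℕ) (j : Fin d) :
    Ideal (MvPolynomial (Fin d) ℚ) :=
  Ideal.span {f | ∃ u v : Fin d → ℕ, (∀ k, k < j → u k = 0) ∧ (∀ k, k < j → v k = 0) ∧
    A.mulVec u = A.mulVec v ∧ f = monom u - monom v}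



/-! ### Auxiliary lemmas -/

lemma monom_mul (a b : Fin d → ℕ) : monom a * monom b = monom (fun k => a k + b k) := by
  rw [monom, monom, monom, monomial_mul, one_mul]
  have h : Finsupp.equivFunOnFinite.symm a + Finsupp.equivFunOnFinite.symm b
      = Finsupp.equivFunOnFinite.symm (fun k => a k + b k) := by
    ext k
    simp [Finsupp.coe_equivFunOnFinite_symm]
  rw [h]

lemma coeff_monom_sub (u v : Fin d → ℕ) (μ : Fin d →₀ ℕ) :
    MvPolynomial.coeff μ (monom u - monom v) =
      (if Finsupp.equivFunOnFinite.symm u = μ then 1 else 0) -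
      (if Finsupp.equivFunOnFinite.symm v = μ then 1 else 0) := by
  simp [monom, MvPolynomial.coeff_sub, MvPolynomial.coeff_monomial]

lemma eF_inj {u v : Fin d → ℕ}
    (h : Finsupp.equivFunOnFinite.symm u = Finsupp.equivFunOnFinite.symm v) : u = v :=
  Finsupp.equivFunOnFinite.symm.injective h

lemma support_monom_sub (u v : Fin d → ℕ) :
    ∀ μ ∈ (monom u - monom v).support,
      μ = Finsupp.equivFunOnFinite.symm u ∨ μ = Finsupp.equivFunOnFinite.symm v := by
  intro μ hμ
  rw [MvPolynomial.mem_support_iff] at hμ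
  by_contra hc
  push_neg at hc
  rw [coeff_monom_sub, if_neg (fun h => hc.1 h.symm), if_neg (fun h => hc.2 h.symm)] at hμ
  simp at hμ

lemma monom_sub_mem_support_left {u v : Fin d → ℕ} (h : u ≠ v) :
    Finsupp.equivFunOnFinite.symm u ∈ (monom u - monom v).support := by
  rw [MvPolynomial.mem_support_iff, coeff_monom_sub, if_pos rfl,
    if_neg (fun hh => h (eF_inj hh).symm)]
  norm_num

lemma monom_sub_mem_support_right {u v : Fin d → ℕ} (h : u ≠ v) :
    Finsupp.equivFunOnFinite.symm v ∈ (monom u - monom v).support := by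
  rw [MvPolynomial.mem_support_iff, coeff_monom_sub, if_pos rfl,
    if_neg (fun hh => h (eF_inj hh))]
  norm_num

lemma monom_sub_ne_zero {u v : Fin d → ℕ} (h : u ≠ v) : monom u - monom v ≠ 0 := by
  intro h0
  have := monom_sub_mem_support_left h
  rw [h0] at this
  simp at this

lemma lexLt_asymm {μ ν : Fin d →₀ ℕ} (h1 : lexLt μ ν) (h2 : lexLt ν μ) : False := by
  obtain ⟨i1, hi1, he1⟩ := h1
  obtain ⟨i2, hi2, he2⟩ := h2
  rcases lt_trichotomy i1 i2 with h | h | h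
  · rw [he2 i1 h] at hi1
    exact lt_irrefl _ hi1
  · subst h
    exact lt_irrefl _ (hi1.trans hi2)
  · rw [he1 i2 h] at hi2
    exact lt_irrefl _ hi2

lemma isLexLead_snd {u v : Fin d → ℕ}
    (h : lexLt (Finsupp.equivFunOnFinite.symm u) (Finsupp.equivFunOnFinite.symm v)) :
    IsLexLead (monom u - monom v) (Finsupp.equivFunOnFinite.symm v) := by
  have hne : u ≠ v := by
    rintro rfl
    exact lexLt_asymm h h
  refine ⟨monom_sub_mem_support_right hne, ?_⟩
  intro μ hμ hμne
  rcases support_monom_sub u v μ hμ with rfl | rfl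
  · exact h
  · exact absurd rfl hμne

lemma isLexLead_unique {p : MvPolynomial (Fin d) ℚ} {ν₁ ν₂ : Fin d →₀ ℕ}
    (h1 : IsLexLead p ν₁) (h2 : IsLexLead p ν₂) : ν₁ = ν₂ := by
  by_contra hne
  exact lexLt_asymm (h2.2 ν₁ h1.1 hne) (h1.2 ν₂ h2.1 (Ne.symm hne))

lemma lexLt_wf : WellFounded (fun a b : Fin d → ℕ =>
    lexLt (Finsupp.equivFunOnFinite.symm a) (Finsupp.equivFunOnFinite.symm b)) := by
  have hwf : WellFounded ((· < ·) : Lex (Fin d →₀ ℕ) → Lex (Fin d →₀ ℕ) → Prop) :=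
    Finsupp.Lex.wellFoundedLT.wf
  have h2 := InvImage.wf (fun a : Fin d → ℕ => toLex (Finsupp.equivFunOnFinite.symm a)) hwf
  refine Subrelation.wf ?_ h2
  rintro a b ⟨i0, hlt, heq⟩
  exact Finsupp.Lex.lt_iff.mpr ⟨i0, fun j hj => heq j hj, hlt⟩

lemma intMat_mulVec (A : Matrix (Fin r) (Fin d) ℕ) (x : Fin d → ℕ) :
    (intMat A).mulVec (natToInt x) = natToInt (A.mulVec x) := by
  funext i
  simp [Matrix.mulVec, dotProduct, intMat, natToInt]

lemma natToInt_inj {x y : Fin d → ℕ} (h : natToInt x = natToInt y) : x = y := by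
  funext k
  have := congrFun h k
  simpa [natToInt] using this

lemma tables_sub_move {A : Matrix (Fin r) (Fin d) ℕ} {t : Fin r → ℕ} {x x' : Fin d → ℕ}
    {n : Fin d → ℤ} (htab : x ∈ tables A t) (hk : n ∈ kerZ A)
    (h : natToInt x' = natToInt x - n) : x' ∈ tables A t := by
  have hk' : (intMat A).mulVec n = 0 := hk
  have h1 : (intMat A).mulVec (natToInt x') = (intMat A).mulVec (natToInt x) := by
    rw [h, Matrix.mulVec_sub, hk']
    simp
  rw [intMat_mulVec, intMat_mulVec] at h1
  have h2 : A.mulVec x' = A.mulVec x := natToInt_inj h1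
  show A.mulVec x' = t
  rw [h2]
  exact htab

lemma step_mem {I : Ideal (MvPolynomial (Fin d) ℚ)} {n : Fin d → ℤ}
    (hb : moveBinomial n ∈ I) (s : Fin d → ℤ) (hs : ∀ k, 0 ≤ s k)
    (hsn : ∀ k, 0 ≤ s k + n k) :
    monom (fun k => (s k + n k).toNat) - monom (fun k => (s k).toNat) ∈ I := by
  have key : monom (fun k => (s k + n k).toNat) - monom (fun k => (s k).toNat)
      = monom (fun k => (s k).toNat - negPart n k) * moveBinomial n := by
    rw [moveBinomial, mul_sub, monom_mul, monom_mul]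
    have e1 : (fun k => (s k).toNat - negPart n k + posPart n k)
        = (fun k => (s k + n k).toNat) := by
      funext k
      have h1 := hs k
      have h2 := hsn k
      simp only [posPart, negPart]
      omega
    have e2 : (fun k => (s k).toNat - negPart n k + negPart n k)
        = (fun k => (s k).toNat) := by
      funext k
      have h1 := hs k
      have h2 := hsn k
      simp only [negPart]
      omega
    rw [e1, e2]
  rw [key]
  exact Ideal.mul_mem_left _ _ hb

lemma connects_mem {M : Set (Fin d → ℤ)} {I : Ideal (MvPolynomial (Fin d) ℚ)}
    (hMb : ∀ mm ∈ M, moveBinomial mm ∈ I) :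
    ∀ (l : List (Fin d → ℤ)) (v : Fin d → ℤ), (∀ mm ∈ l, mm ∈ M) →
      (∀ k, k ≤ l.length → ∀ i, 0 ≤ v i + (l.take k).sum i) →
      monom (fun k => (v k + l.sum k).toNat) - monom (fun k => (v k).toNat) ∈ I := by
  intro l
  induction l with
  | nil =>
    intro v _ _
    have e1 : (fun k => (v k + List.sum ([] : List (Fin d → ℤ)) k).toNat)
        = (fun k => (v k).toNat) := by
      funext k
      simp
    rw [e1, sub_self]
    exact I.zero_mem
  | cons mm l IH =>
    intro v hlM hnn
    have hv0 : ∀ k, 0 ≤ v k := by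
      intro k
      have := hnn 0 (Nat.zero_le _) k
      simpa using this
    have hv1 : ∀ k, 0 ≤ v k + mm k := by
      intro k
      have := hnn 1 (by simp) k
      simpa using this
    have hA := IH (v + mm) (fun x hx => hlM x (List.mem_cons_of_mem _ hx)) ?hnn'
    case hnn' =>
      intro k hk i
      have := hnn (k + 1) (by simpa using Nat.succ_le_succ hk) i
      simp only [List.take_succ_cons, List.sum_cons, Pi.add_apply] at this ⊢
      omega
    have hB := step_mem (hMb mm (hlM mm (List.mem_cons_self))) v hv0 hv1
    have e1 : (fun k => (v k + (mm :: l).sum k).toNat)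
        = (fun k => ((v + mm) k + l.sum k).toNat) := by
      funext k
      congr 1
      simp [List.sum_cons]
      ring
    have e2 : (fun k => ((v + mm) k).toNat) = (fun k => (v k + mm k).toNat) := rfl
    rw [e1]
    rw [e2] at hA
    have e3 : monom (fun k => ((v + mm) k + l.sum k).toNat) - monom (fun k => (v k).toNat)
        = (monom (fun k => ((v + mm) k + l.sum k).toNat)
            - monom (fun k => (v k + mm k).toNat))
          + (monom (fun k => (v k + mm k).toNat) - monom (fun k => (v k).toNat)) := by ring
    rw [e3]
    exact I.add_mem hA hB

/-- Truncation: zero out the first `N` coordinates. -/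
def truncF (N : ℕ) (x : Fin d → ℕ) : Fin d → ℕ := fun k => if (k : ℕ) < N then 0 else x k

lemma monom_trunc_step (N : ℕ) (hN : N < d) (x : Fin d → ℕ) :
    monom (truncF N x) = X (⟨N, hN⟩ : Fin d) ^ (x ⟨N, hN⟩) * monom (truncF (N + 1) x) := by
  rw [monom, monom, X_pow_eq_monomial, monomial_mul, one_mul]
  have h : Finsupp.single (⟨N, hN⟩ : Fin d) (x ⟨N, hN⟩)
      + Finsupp.equivFunOnFinite.symm (truncF (N + 1) x)
      = Finsupp.equivFunOnFinite.symm (truncF N x) := by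
    ext k
    simp only [Finsupp.add_apply, Finsupp.single_apply,
      Finsupp.coe_equivFunOnFinite_symm, truncF]
    by_cases hk : (⟨N, hN⟩ : Fin d) = k
    · subst hk
      simp
    · have hkN : (k : ℕ) ≠ N := fun hh => hk (Fin.ext hh.symm)
      rw [if_neg hk]
      split_ifs <;> omega
  rw [h]

lemma strip_mem {G : Set (MvPolynomial (Fin d) ℚ)}
    (hsat : ∀ i : Fin d, (i : ℕ) < d - 1 → ∀ p : MvPolynomial (Fin d) ℚ,
      (∃ k : ℕ, (X i) ^ k * p ∈ Ideal.span G) →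
      (∀ ν ∈ p.support, ∀ j : Fin d, j ≤ i → ν j = 0) → p ∈ Ideal.span G)
    (i : Fin d) (u v : Fin d → ℕ) (hagree : ∀ j, j < i → u j = v j)
    (hmem : monom u - monom v ∈ Ideal.span G) :
    monom (truncF (i : ℕ) u) - monom (truncF (i : ℕ) v) ∈ Ideal.span G := by
  suffices h : ∀ N, N ≤ (i : ℕ) → monom (truncF N u) - monom (truncF N v) ∈ Ideal.span G from
    h (i : ℕ) le_rfl
  intro N
  induction N with
  | zero =>
    intro _
    have e1 : ∀ x : Fin d → ℕ, truncF 0 x = x := by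
      intro x
      funext k
      simp [truncF]
    rw [e1, e1]
    exact hmem
  | succ N IH =>
    intro hNi
    have hNi' : N < (i : ℕ) := hNi
    have hmemN := IH (le_of_lt hNi')
    have hNd : N < d := lt_trans hNi' i.isLt
    set j : Fin d := ⟨N, hNd⟩ with hj
    have hji : j < i := by
      rw [Fin.lt_def]
      exact hNi'
    have hjd : (j : ℕ) < d - 1 := by
      have h2 := i.isLt
      show N < d - 1
      omega
    have hid : X j ^ (u j) * (monom (truncF (N + 1) u) - monom (truncF (N + 1) v))
        = monom (truncF N u) - monom (truncF N v) := by
      rw [mul_sub, ← monom_trunc_step N hNd u]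
      have hv : u j = v j := hagree j hji
      rw [hv, ← monom_trunc_step N hNd v]
    refine hsat j hjd _ ⟨u j, by rw [hid]; exact hmemN⟩ ?_
    intro ν hν j' hj'
    have hj'N : (j' : ℕ) < N + 1 := by
      have h1 := (Fin.le_def.mp hj')
      have h2 : (j : ℕ) = N := rfl
      omega
    rcases support_monom_sub _ _ ν hν with rfl | rfl <;>
      simp [truncF, Finsupp.coe_equivFunOnFinite_symm, hj'N]


lemma descent {A : Matrix (Fin r) (Fin d) ℕ} {t : Fin r → ℕ}
    {gnum : ℕ} {mv : Fin gnum → (Fin d → ℤ)}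
    {G : Set (MvPolynomial (Fin d) ℚ)}
    (hGdef : G = {p | ∃ i : Fin gnum, p = moveBinomial (mv i)})
    (hker : ∀ jj, mv jj ∈ kerZ A)
    (hGnz : ∀ g ∈ G, g ≠ 0)
    (hGB' : ∀ f ∈ Ideal.span G, f ≠ 0 → ∃ g ∈ G, ∃ νg νf,
      IsLexLead g νg ∧ IsLexLead f νf ∧ expDivides νg νf)
    (hsq : ∀ p ∈ G, ∀ i : Fin d, OnlyVarsFrom p i → SquareFreeIn p i)
    (i : Fin d) (w' u' : Fin d → ℕ) (hu' : ∀ j, j < i → u' j = 0) :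
    ∀ z : Fin d → ℕ, (∀ j, j < i → z j = 0) →
      ((fun k => w' k + z k) ∈ tables A t) →
      (monom u' - monom z ∈ Ideal.span G) → u' i < z i →
      ∃ z' : Fin d → ℕ, (∀ j, j < i → z' j = 0) ∧
        ((fun k => w' k + z' k) ∈ tables A t) ∧ z' i + 1 = z i := by
  intro z
  refine (lexLt_wf (d := d)).induction
    (C := fun z => (∀ j, j < i → z j = 0) →
      ((fun k => w' k + z k) ∈ tables A t) →
      (monom u' - monom z ∈ Ideal.span G) → u' i < z i →
      ∃ z' : Fin d → ℕ, (∀ j, j < i → z' j = 0) ∧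
        ((fun k => w' k + z' k) ∈ tables A t) ∧ z' i + 1 = z i) z ?_
  clear z
  intro z IH hz0 htab hmem hlt
  -- the binomial is nonzero with lex lead `z`
  have hune : u' ≠ z := by
    intro h
    rw [h] at hlt
    exact lt_irrefl _ hlt
  have hlexuz : lexLt (Finsupp.equivFunOnFinite.symm u') (Finsupp.equivFunOnFinite.symm z) := by
    refine ⟨i, ?_, ?_⟩
    · simpa [Finsupp.coe_equivFunOnFinite_symm] using hlt
    · intro j hj
      simp [Finsupp.coe_equivFunOnFinite_symm, hu' j hj, hz0 j hj]
  obtain ⟨g0, hg0G, νg, νf, hleadg, hleadf, hdiv⟩ :=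
    hGB' _ hmem (monom_sub_ne_zero hune)
  have hνf : νf = Finsupp.equivFunOnFinite.symm z :=
    isLexLead_unique hleadf (isLexLead_snd hlexuz)
  -- identify g0 as a move binomial and choose the sign `n` whose positive part leads
  obtain ⟨j0, hj0⟩ : ∃ j0 : Fin gnum, g0 = moveBinomial (mv j0) := by
    rw [hGdef] at hg0G
    exact hg0G
  have hg0ne := hGnz g0 (by rw [hGdef]; exact ⟨j0, hj0⟩)
  have hpn0 : posPart (mv j0) ≠ negPart (mv j0) := by
    intro h
    exact hg0ne (by rw [hj0, moveBinomial, h, sub_self])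
  have hsupp0 : ∀ μ ∈ g0.support,
      μ = Finsupp.equivFunOnFinite.symm (posPart (mv j0)) ∨
      μ = Finsupp.equivFunOnFinite.symm (negPart (mv j0)) := by
    rw [hj0, moveBinomial]
    exact support_monom_sub _ _
  obtain ⟨n, hnk, hbin, hνg, hlexn, hpn, hg0supp⟩ :
      ∃ n : Fin d → ℤ, n ∈ kerZ A ∧
        (monom (posPart n) - monom (negPart n) ∈ Ideal.span G) ∧
        νg = Finsupp.equivFunOnFinite.symm (posPart n) ∧
        lexLt (Finsupp.equivFunOnFinite.symm (negPart n))
          (Finsupp.equivFunOnFinite.symm (posPart n)) ∧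
        posPart n ≠ negPart n ∧
        (∀ μ ∈ g0.support, μ = Finsupp.equivFunOnFinite.symm (posPart n) ∨
          μ = Finsupp.equivFunOnFinite.symm (negPart n)) := by
    have hg0I : g0 ∈ Ideal.span G := Ideal.subset_span (by rw [hGdef]; exact ⟨j0, hj0⟩)
    have hmemL : Finsupp.equivFunOnFinite.symm (posPart (mv j0)) ∈ g0.support := by
      rw [hj0, moveBinomial]
      exact monom_sub_mem_support_left hpn0
    have hmemR : Finsupp.equivFunOnFinite.symm (negPart (mv j0)) ∈ g0.support := by
      rw [hj0, moveBinomial]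
      exact monom_sub_mem_support_right hpn0
    rcases hsupp0 νg hleadg.1 with h | h
    · refine ⟨mv j0, hker j0, by rw [← moveBinomial, ← hj0]; exact hg0I, h, ?_, hpn0, hsupp0⟩
      rw [← h]
      refine hleadg.2 _ hmemR ?_
      rw [h]
      intro hh
      exact hpn0 (eF_inj hh).symm
    · refine ⟨-(mv j0), ?_, ?_, ?_, ?_, ?_, ?_⟩
      · show (intMat A).mulVec (-(mv j0)) = 0
        have hk' : (intMat A).mulVec (mv j0) = 0 := hker j0
        rw [Matrix.mulVec_neg, hk', neg_zero]
      · show monom (posPart (-(mv j0))) - monom (negPart (-(mv j0))) ∈ Ideal.span G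
        have e1 : posPart (-(mv j0)) = negPart (mv j0) := rfl
        have e2 : negPart (-(mv j0)) = posPart (mv j0) := by
          funext k
          simp [negPart, posPart]
        rw [e1, e2]
        have : monom (negPart (mv j0)) - monom (posPart (mv j0)) = -g0 := by
          rw [hj0, moveBinomial]
          ring
        rw [this]
        exact neg_mem hg0I
      · show νg = Finsupp.equivFunOnFinite.symm (posPart (-(mv j0)))
        have e1 : posPart (-(mv j0)) = negPart (mv j0) := rfl
        rw [e1]
        exact h
      · have e1 : posPart (-(mv j0)) = negPart (mv j0) := rfl
        have e2 : negPart (-(mv j0)) = posPart (mv j0) := by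
          funext k
          simp [negPart, posPart]
        rw [e1, e2, ← h]
        refine hleadg.2 _ hmemL ?_
        rw [h]
        intro hh
        exact hpn0 (eF_inj hh)
      · have e1 : posPart (-(mv j0)) = negPart (mv j0) := rfl
        have e2 : negPart (-(mv j0)) = posPart (mv j0) := by
          funext k
          simp [negPart, posPart]
        rw [e1, e2]
        exact Ne.symm hpn0
      · have e1 : posPart (-(mv j0)) = negPart (mv j0) := rfl
        have e2 : negPart (-(mv j0)) = posPart (mv j0) := by
          funext k
          simp [negPart, posPart]
        rw [e1, e2]
        intro μ hμ
        exact (hsupp0 μ hμ).symm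
  -- the divisibility condition
  have hle : ∀ k, posPart n k ≤ z k := by
    intro k
    have := hdiv k
    rw [hνg, hνf] at this
    simpa [Finsupp.coe_equivFunOnFinite_symm] using this
  -- first nonzero coordinate of n
  obtain ⟨i₀, hi₀, heq₀⟩ := hlexn
  rw [Finsupp.coe_equivFunOnFinite_symm, Finsupp.coe_equivFunOnFinite_symm] at hi₀
  have heq₀' : ∀ j, j < i₀ → negPart n j = posPart n j := by
    intro j hj
    have := heq₀ j hj
    rwa [Finsupp.coe_equivFunOnFinite_symm, Finsupp.coe_equivFunOnFinite_symm]
      at this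
  have hii₀ : i ≤ i₀ := by
    by_contra hcon
    push_neg at hcon
    have h1 := hz0 i₀ hcon
    have h2 := hle i₀
    omega
  have hpz : ∀ j, j < i → posPart n j = 0 := by
    intro j hj
    have := hle j
    rw [hz0 j hj] at this
    omega
  have hnz : ∀ j, j < i → negPart n j = 0 := by
    intro j hj
    rw [heq₀' j (lt_of_lt_of_le hj hii₀)]
    exact hpz j hj
  -- squarefree in x_i
  have hOV : OnlyVarsFrom g0 i := by
    intro ν hν j hj
    rcases hg0supp ν hν with rfl | rfl
    · rw [Finsupp.coe_equivFunOnFinite_symm]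
      exact hpz j hj
    · rw [Finsupp.coe_equivFunOnFinite_symm]
      exact hnz j hj
  have hSF := hsq g0 (by rw [hGdef]; exact ⟨j0, hj0⟩) i hOV
  have hposmem : Finsupp.equivFunOnFinite.symm (posPart n) ∈ g0.support := by
    rcases hg0supp νg hleadg.1 with h | h
    · rw [← h]; exact hleadg.1
    · rw [hνg] at h
      exact absurd (eF_inj h) hpn
  have hposi1 : posPart n i ≤ 1 := by
    have := hSF _ hposmem
    rwa [Finsupp.coe_equivFunOnFinite_symm] at this
  -- the new vector z'
  set c : Fin d → ℕ := fun k => z k - posPart n k with hc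
  set z' : Fin d → ℕ := fun k => c k + negPart n k with hz'
  have hz'int : ∀ k, (z' k : ℤ) = (z k : ℤ) - n k := by
    intro k
    have h1 := hle k
    simp only [hz', hc, posPart, negPart] at h1 ⊢
    omega
  have htab' : (fun k => w' k + z' k) ∈ tables A t := by
    refine tables_sub_move htab hnk ?_
    funext k
    have := hz'int k
    simp only [natToInt, Pi.sub_apply]
    push_cast
    omega
  have hz'0 : ∀ j, j < i → z' j = 0 := by
    intro j hj
    simp only [hz', hc]
    rw [hpz j hj, hnz j hj, hz0 j hj]
  rcases eq_or_lt_of_le hii₀ with heqi | hlti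
  · -- i = i₀ : coordinate i drops by exactly one
    rw [← heqi] at hi₀
    have hpos1 : posPart n i = 1 := by omega
    have hneg0 : negPart n i = 0 := by omega
    refine ⟨z', hz'0, htab', ?_⟩
    simp only [hz', hc]
    have := hle i
    omega
  · -- i < i₀ : coordinate i unchanged, recurse
    have hpieq : posPart n i = negPart n i := (heq₀' i hlti).symm
    have hpi0 : posPart n i = 0 ∧ negPart n i = 0 := by
      simp only [posPart, negPart] at hpieq ⊢
      omega
    have hz'i : z' i = z i := by
      simp only [hz', hc]
      rw [hpi0.1, hpi0.2]
      omega
    have hmem' : monom u' - monom z' ∈ Ideal.span G := by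
      have key : monom z - monom z' = monom c * (monom (posPart n) - monom (negPart n)) := by
        rw [mul_sub, monom_mul, monom_mul]
        have e1 : (fun k => c k + posPart n k) = z := by
          funext k
          have := hle k
          simp only [hc]
          omega
        have e2 : (fun k => c k + negPart n k) = z' := rfl
        rw [e1, e2]
      have h2 : monom z - monom z' ∈ Ideal.span G := by
        rw [key]
        exact Ideal.mul_mem_left _ _ hbin
      have e3 : monom u' - monom z' = (monom u' - monom z) + (monom z - monom z') := by ring
      rw [e3]
      exact Ideal.add_mem _ hmem h2
    have hdesc : lexLt (Finsupp.equivFunOnFinite.symm z') (Finsupp.equivFunOnFinite.symm z) := by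
      refine ⟨i₀, ?_, ?_⟩
      · simp only [Finsupp.coe_equivFunOnFinite_symm, hz', hc]
        have := hle i₀
        omega
      · intro j hj
        have h1 := heq₀' j hj
        have h2 := hle j
        simp only [Finsupp.coe_equivFunOnFinite_symm, hz', hc]
        simp only [posPart, negPart] at h1 ⊢
        omega
    obtain ⟨z'', hz''0, htab'', hz''i⟩ :=
      IH z' hdesc hz'0 htab' hmem' (by rw [hz'i]; exact hlt)
    exact ⟨z'', hz''0, htab'', by omega⟩

/-- Proposition 4.1. Suppose `M_{A,t} = {±m₁, …, ±m_g}` is a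
Markov subbasis such that `G = {x^{m_i⁺} - x^{m_i⁻}}` (1) is a lex Gröbner basis
for the ideal `I_{M_{A,t}}` it generates, (2) the elements of `G` lying in
`ℚ[x_i, …, x_d]` are square-free in `x_i` for each `i`, and (3)
`(I_{M_{A,t}} : x_i^∞) ∩ ℚ[x_{i+1}, …, x_d] ⊆ I_{M_{A,t}}` for `i = 1, …, d-1`.
Then `A⁻¹[t]` has the sequential interval property. -/
theorem seqInterval_of_markovSubbasis {r d : ℕ}
    (A : Matrix (Fin r) (Fin d) ℕ) (hA : RowsPos A) (t : Fin r → ℕ)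
    (g : ℕ) (m : Fin g → (Fin d → ℤ))
    (hsub : IsMarkovSubbasis A t {v | ∃ i, v = m i ∨ v = -(m i)})
    (G : Set (MvPolynomial (Fin d) ℚ))
    (hGdef : G = {p | ∃ i : Fin g, p = moveBinomial (m i)})
    (hGB : IsLexGB G (Ideal.span G))
    (hsq : ∀ p ∈ G, ∀ i : Fin d, OnlyVarsFrom p i → SquareFreeIn p i)
    (hsat : ∀ i : Fin d, (i : ℕ) < d - 1 → ∀ p : MvPolynomial (Fin d) ℚ,
      (∃ k : ℕ, (X i) ^ k * p ∈ Ideal.span G) →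
      (∀ ν ∈ p.support, ∀ j : Fin d, j ≤ i → ν j = 0) →
      p ∈ Ideal.span G) :
    SeqIntervalProperty A t := by
  intro i w a ha b hb c hac hcb
  obtain ⟨hMfin, hMker, hconn⟩ := hsub
  obtain ⟨-, hGnzI, hGB'⟩ := hGB
  have hGnz : ∀ g ∈ G, g ≠ 0 := fun g hg => (hGnzI g hg).1
  have hker : ∀ jj, m jj ∈ kerZ A := fun jj => hMker ⟨jj, Or.inl rfl⟩
  have hMbin : ∀ mm ∈ {v | ∃ i, v = m i ∨ v = -(m i)}, moveBinomial mm ∈ Ideal.span G := by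
    rintro mm ⟨jj, h | h⟩
    · subst h
      exact Ideal.subset_span (by rw [hGdef]; exact ⟨jj, rfl⟩)
    · subst h
      have e1 : moveBinomial (-(m jj)) = -moveBinomial (m jj) := by
        rw [moveBinomial, moveBinomial]
        have e2 : posPart (-(m jj)) = negPart (m jj) := rfl
        have e3 : negPart (-(m jj)) = posPart (m jj) := by
          funext k
          simp [negPart, posPart]
        rw [e2, e3]
        ring
      rw [e1]
      exact neg_mem (Ideal.subset_span (by rw [hGdef]; exact ⟨jj, rfl⟩))
  have hbinmem : ∀ u ∈ tables A t, ∀ v ∈ tables A t,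
      monom u - monom v ∈ Ideal.span G := by
    intro u hu v hv
    obtain ⟨l, hlM, hsum, hnn⟩ := hconn u hu v hv
    have h1 := connects_mem hMbin l (natToInt v) hlM hnn
    have e1 : (fun k => (natToInt v k + l.sum k).toNat) = u := by
      funext k
      have h2 := congrFun hsum k
      simp only [natToInt, Pi.add_apply] at h2 ⊢
      omega
    have e2 : (fun k => (natToInt v k).toNat) = v := by
      funext k
      simp [natToInt]
    rwa [e1, e2] at h1
  obtain ⟨u, hu, huw, hua⟩ := ha
  have key : ∀ N : ℕ, ∀ b' : ℕ, b' ∈ stepSet A t i w → c ≤ b' → b' - c = N →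
      c ∈ stepSet A t i w := by
    intro N
    induction N with
    | zero =>
      intro b' hb' hcb' h0
      have : c = b' := by omega
      rw [this]
      exact hb'
    | succ N IH =>
      intro b' hb' hcb' hN
      have hcblt : c < b' := by omega
      obtain ⟨v, hv, hvw, hvb⟩ := hb'
      have halt : a < b' := by omega
      have hmem0 : monom u - monom v ∈ Ideal.span G := hbinmem u hu v hv
      have hagree : ∀ j, j < i → u j = v j := fun j hj => (huw j hj).trans (hvw j hj).symm
      have hmem1 := strip_mem hsat i u v hagree hmem0
      set w' : Fin d → ℕ := fun k => if (k : ℕ) < (i : ℕ) then w k else 0 with hw'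
      have hvz : (fun k => w' k + truncF (i : ℕ) v k) = v := by
        funext k
        simp only [hw', truncF]
        by_cases h : (k : ℕ) < (i : ℕ)
        · rw [if_pos h, if_pos h]
          have := hvw k (Fin.lt_def.mpr h)
          omega
        · rw [if_neg h, if_neg h]
          omega
      have htabv : (fun k => w' k + truncF (i : ℕ) v k) ∈ tables A t := by
        rw [hvz]
        exact hv
      have hzeros : ∀ x : Fin d → ℕ, ∀ j : Fin d, j < i → truncF (i : ℕ) x j = 0 := by
        intro x j hj
        simp [truncF, Fin.lt_def.mp hj]
      have hlt2 : truncF (i : ℕ) u i < truncF (i : ℕ) v i := by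
        simp only [truncF, lt_irrefl, if_neg (lt_irrefl (i : ℕ))]
        rw [hua, hvb]
        exact halt
      obtain ⟨z', hz'0, htab', hz'i⟩ :=
        descent hGdef hker hGnz hGB' hsq i w' (truncF (i : ℕ) u) (hzeros u)
          (truncF (i : ℕ) v) (hzeros v) htabv hmem1 hlt2
      have hb1 : b' - 1 ∈ stepSet A t i w := by
        refine ⟨fun k => w' k + z' k, htab', ?_, ?_⟩
        · intro j hj
          have h1 : (j : ℕ) < (i : ℕ) := Fin.lt_def.mp hj
          show w' j + z' j = w j
          simp only [hw']
          rw [if_pos h1, hz'0 j hj, add_zero]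
        · have h1 : ¬ ((i : ℕ) < (i : ℕ)) := lt_irrefl _
          simp only [hw', if_neg h1, zero_add]
          have h2 : truncF (i : ℕ) v i = b' := by
            simp only [truncF, if_neg h1]
            exact hvb
          omega
      exact IH (b' - 1) hb1 (by omega) (by omega)
  exact key (b - c) b hb hcb rfl


end SIS
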